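/- Let P : ℝ^n → ℝ^n be a polynomial map of degree at most N. Then there is a constant C(n,N) such that for almost every y ∈ P(ℝ^n) (with respect to Lebesgue measure), the fiber P^{-1}(y) has at most C(n,N) elements. -/

import Mathlib

open MeasureTheory

open MvPolynomial in
private lemma continuous_mveval {n : ℕ} (p : MvPolynomial (Fin n) ℝ) :
    Continuous fun x : Fin n → ℝ => eval x p := by
  induction p using MvPolynomial.induction_on with
  | C a => simpa using continuous_const
  | add p q hp hq => simp only [map_add]; exact hp.add hq
  | mul_X p i hp => simp only [map_mul, eval_X]; exact hp.mul (continuous_apply i)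

open MvPolynomial in
private lemma mv_zero_set_null :
    ∀ (n : ℕ) (p : MvPolynomial (Fin n) ℝ), p ≠ 0 →
      volume {x : Fin n → ℝ | eval x p = 0} = 0 := by
  intro n
  induction n with
  | zero =>
    intro p hp
    obtain ⟨c, rfl⟩ := MvPolynomial.C_surjective (Fin 0) p
    have hc : c ≠ 0 := fun h => hp (by rw [h, map_zero])
    have : {x : Fin 0 → ℝ | eval x (C c) = 0} = ∅ := by
      ext x; simp [hc]
    rw [this]; simp
  | succ n ih =>
    intro p hp
    set q : Polynomial (MvPolynomial (Fin n) ℝ) := finSuccEquiv ℝ n p with hqdef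
    have hq0 : q ≠ 0 := by
      intro h
      exact hp ((finSuccEquiv ℝ n).injective (h.trans (map_zero _).symm))
    have hc : q.leadingCoeff ≠ 0 := Polynomial.leadingCoeff_ne_zero.mpr hq0
    set S : Set (ℝ × (Fin n → ℝ)) := {z | eval (Fin.cons z.1 z.2) p = 0} with hSdef
    have hcont : Continuous fun z : ℝ × (Fin n → ℝ) => eval (Fin.cons z.1 z.2) p := by
      refine (continuous_mveval p).comp ?_
      refine continuous_pi fun j => ?_
      refine Fin.cases ?_ (fun j => ?_) j
      · simpa using continuous_fst
      · simp only [Fin.cons_succ]; exact (continuous_apply j).comp continuous_snd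
    have hSm : MeasurableSet S := by
      have : S = (fun z : ℝ × (Fin n → ℝ) => eval (Fin.cons z.1 z.2) p) ⁻¹' {0} := rfl
      rw [this]
      exact (isClosed_singleton.preimage hcont).measurableSet
    have hS0m : MeasurableSet {x : Fin (n+1) → ℝ | eval x p = 0} := by
      have : {x : Fin (n+1) → ℝ | eval x p = 0}
          = (fun x : Fin (n+1) → ℝ => eval x p) ⁻¹' {0} := rfl
      rw [this]
      exact (isClosed_singleton.preimage (continuous_mveval p)).measurableSet
    have hmp := (volume_preserving_piFinSuccAbove (fun _ : Fin (n + 1) => ℝ) 0).symm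
    rw [← hmp.measure_preimage hS0m.nullMeasurableSet]
    have he : ∀ z : ℝ × (Fin n → ℝ),
        (MeasurableEquiv.piFinSuccAbove (fun _ : Fin (n+1) => ℝ) 0).symm z
          = (Fin.cons z.1 z.2 : Fin (n+1) → ℝ) := by
      intro z
      rw [MeasurableEquiv.piFinSuccAbove_symm_apply]
      exact Fin.insertNth_zero' z.1 z.2
    have hpre : (MeasurableEquiv.piFinSuccAbove (fun _ : Fin (n + 1) => ℝ) 0).symm ⁻¹'
        {x : Fin (n+1) → ℝ | eval x p = 0} = S := by
      ext z
      rw [Set.mem_preimage, he z]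
      exact Iff.rfl
    rw [hpre]
    have hswap : (volume : Measure (ℝ × (Fin n → ℝ))) S
        = ((volume : Measure (Fin n → ℝ)).prod (volume : Measure ℝ)) (Prod.swap ⁻¹' S) := by
      rw [Measure.volume_eq_prod, ← Measure.prod_swap,
        Measure.map_apply measurable_swap hSm]
    rw [hswap]
    rw [Measure.measure_prod_null (hSm.preimage measurable_swap)]
    have hae : ∀ᵐ x' : Fin n → ℝ ∂volume, volume {a : ℝ | eval (Fin.cons a x') p = 0} = 0 := by
      filter_upwards [measure_eq_zero_iff_ae_notMem.mp (ih _ hc)] with x' hx'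
      have hr : Polynomial.map (eval x') q ≠ 0 := by
        intro h
        apply hx'
        show eval x' q.leadingCoeff = 0
        rw [Polynomial.leadingCoeff, ← Polynomial.coeff_map, h, Polynomial.coeff_zero]
      have hset : {a : ℝ | eval (Fin.cons a x') p = 0}
          = {a : ℝ | (Polynomial.map (eval x') q).IsRoot a} := by
        ext a
        simp [eval_eq_eval_mv_eval', Polynomial.IsRoot, hqdef]
      rw [hset]
      exact ((Polynomial.finite_setOf_isRoot hr).measure_zero _)
    refine hae.mono fun x' hx' => ?_
    exact hx'

private lemma finrank_restrictDegree_le (n M : ℕ) :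
    Module.finrank ℝ (MvPolynomial.restrictDegree (Fin n) ℝ M) ≤ (M + 1) ^ n := by
  classical
  set Sset : Set (Fin n →₀ ℕ) := {s | ∀ i, s i ≤ M} with hSset
  let φ : Sset → (Fin n → Fin (M + 1)) := fun s i => ⟨s.1 i, Nat.lt_succ_of_le (s.2 i)⟩
  have hφ : Function.Injective φ := by
    intro a b h
    refine Subtype.ext (Finsupp.ext fun i => ?_)
    exact congrArg Fin.val (congrFun h i)
  have : Finite Sset := Finite.of_injective φ hφ
  have : Fintype Sset := Fintype.ofFinite _
  have hbasis := Module.finrank_eq_card_basis (MvPolynomial.basisRestrictSupport ℝ Sset)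
  calc Module.finrank ℝ (MvPolynomial.restrictDegree (Fin n) ℝ M)
      = Fintype.card Sset := hbasis
    _ ≤ Fintype.card (Fin n → Fin (M + 1)) := Fintype.card_le_of_injective φ hφ
    _ = (M + 1) ^ n := by simp

private lemma key_ineq (n N' : ℕ) (hN' : 1 ≤ N') :
    ((n + 1) * ((2 * (n + 1) * N') ^ n + 1) * N' + 1) ^ n
      < ((2 * (n + 1) * N') ^ n + 1 + 1) ^ (n + 1) := by
  set b := 2 * (n + 1) * N' with hb
  set t := b ^ n + 1 with htdef
  have hbpos : 1 ≤ b := Nat.mul_pos (Nat.mul_pos two_pos (Nat.succ_pos n)) hN'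
  have htpos : 1 ≤ t := by omega
  have h1 : (n + 1) * t * N' + 1 ≤ b * t := by
    have h2 : 1 ≤ (n + 1) * t * N' := Nat.mul_pos (Nat.mul_pos (Nat.succ_pos n) htpos) hN'
    calc (n + 1) * t * N' + 1 ≤ (n + 1) * t * N' + (n + 1) * t * N' := by omega
      _ = (2 * (n + 1) * N') * t := by ring
  calc ((n + 1) * t * N' + 1) ^ n ≤ (b * t) ^ n := Nat.pow_le_pow_left h1 n
    _ = b ^ n * t ^ n := mul_pow b t n
    _ < t * t ^ n := by
        have hbt : b ^ n < t := by omega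
        exact Nat.mul_lt_mul_of_lt_of_le hbt (le_refl _) (by positivity)
    _ = t ^ (n + 1) := by ring
    _ ≤ (t + 1) ^ (n + 1) := Nat.pow_le_pow_left (by omega) _

open MvPolynomial in
private lemma exists_relation (n N' t : ℕ)
    (ht : ((n + 1) * t * N' + 1) ^ n < (t + 1) ^ (n + 1))
    (g : Fin (n + 1) → MvPolynomial (Fin n) ℝ) (hg : ∀ j, (g j).totalDegree ≤ N') :
    ∃ c : (Fin (n + 1) → Fin (t + 1)) → ℝ,
      (∑ d : Fin (n + 1) → Fin (t + 1), c d • ∏ j, g j ^ (d j : ℕ)) = 0 ∧ ∃ d, c d ≠ 0 := by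
  classical
  set M := (n + 1) * t * N' with hM
  have hvmem : ∀ d : Fin (n + 1) → Fin (t + 1),
      (∏ j, g j ^ (d j : ℕ)) ∈ restrictDegree (Fin n) ℝ M := by
    intro d
    apply restrictTotalDegree_le_restrictDegree
    rw [mem_restrictTotalDegree]
    calc (∏ j, g j ^ (d j : ℕ)).totalDegree
        ≤ ∑ j, (g j ^ (d j : ℕ)).totalDegree := totalDegree_finset_prod _ _
      _ ≤ ∑ _j : Fin (n + 1), t * N' := by
          refine Finset.sum_le_sum fun j _ => ?_
          refine (totalDegree_pow _ _).trans ?_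
          exact Nat.mul_le_mul (Nat.lt_succ_iff.mp (d j).isLt) (hg j)
      _ = (n + 1) * (t * N') := by simp [Finset.sum_const, mul_comm]
      _ = M := by rw [hM]; ring
  set v : (Fin (n + 1) → Fin (t + 1)) → restrictDegree (Fin n) ℝ M :=
    fun d => ⟨∏ j, g j ^ (d j : ℕ), hvmem d⟩ with hv
  have hnli : ¬ LinearIndependent ℝ v := by
    intro hli
    have h1 := hli.fintype_card_le_finrank
    rw [Fintype.card_fun] at h1
    simp only [Fintype.card_fin] at h1
    exact absurd (h1.trans (finrank_restrictDegree_le n M)) (not_le.mpr ht)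
  obtain ⟨c, hsum, d, hd⟩ := Fintype.not_linearIndependent_iff.mp hnli
  refine ⟨c, ?_, d, hd⟩
  have := congrArg (Submodule.subtype _) hsum
  simpa [v] using this

set_option maxHeartbeats 1000000 in
open MvPolynomial in
private lemma exists_alpha (n N : ℕ) (P : Fin n → MvPolynomial (Fin n) ℝ)
    (hP : ∀ j, (P j).totalDegree ≤ N) (i : Fin n) :
    ∃ α : ℕ → MvPolynomial (Fin n) ℝ, ∃ k ≤ (2 * (n + 1) * max N 1) ^ n + 1,
      α k ≠ 0 ∧
      ∀ x : Fin n → ℝ,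
        ∑ k' ∈ Finset.range ((2 * (n + 1) * max N 1) ^ n + 1 + 1),
          eval (fun j => eval x (P j)) (α k') * (x i) ^ k' = 0 := by
  classical
  set N' := max N 1 with hN'
  set t := (2 * (n + 1) * N') ^ n + 1 with htdef
  have hineq : ((n + 1) * t * N' + 1) ^ n < (t + 1) ^ (n + 1) := key_ineq n N' (le_max_right N 1)
  set g : Fin (n + 1) → MvPolynomial (Fin n) ℝ := Fin.cons (X i) P with hg
  have hgdeg : ∀ j, (g j).totalDegree ≤ N' := by
    intro j
    refine Fin.cases ?_ (fun j => ?_) j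
    · rw [hg]
      simp only [Fin.cons_zero]
      exact (totalDegree_X i).le.trans (le_max_right N 1)
    · rw [hg]
      simp only [Fin.cons_succ]
      exact (hP j).trans (le_max_left N 1)
  obtain ⟨c, hrel, dh, hdh⟩ := exists_relation n N' t hineq g hgdeg
  set md : (Fin (n + 1) → Fin (t + 1)) → (Fin n →₀ ℕ) :=
    fun d => Finsupp.equivFunOnFinite.symm (fun j => (d j.succ : ℕ)) with hmd
  set α : ℕ → MvPolynomial (Fin n) ℝ := fun k =>
    ∑ d ∈ Finset.univ.filter (fun d : Fin (n + 1) → Fin (t + 1) => (d 0 : ℕ) = k),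
      c d • monomial (md d) 1 with hα
  have hmdapp : ∀ d j, md d j = (d j.succ : ℕ) := by
    intro d j
    rw [hmd]
    rfl
  refine ⟨α, (dh 0 : ℕ), Nat.lt_succ_iff.mp (dh 0).isLt, ?_, ?_⟩
  · -- α (dh 0) ≠ 0
    intro h0
    apply hdh
    have hco := congrArg (coeff (md dh)) h0
    rw [hα] at hco
    simp only [coeff_zero] at hco
    rw [coeff_sum] at hco
    rw [Finset.sum_eq_single dh] at hco
    · simpa [coeff_smul, coeff_monomial] using hco
    · intro d hdmem hdne
      have hd0 : (d 0 : ℕ) = (dh 0 : ℕ) := (Finset.mem_filter.mp hdmem).2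
      have : md d ≠ md dh := by
        intro he
        apply hdne
        funext j
        refine Fin.cases ?_ (fun j => ?_) j
        · exact Fin.val_injective hd0
        · have := congrArg (fun f : Fin n →₀ ℕ => f j) he
          simp only [hmdapp] at this
          exact Fin.val_injective this
      rw [coeff_smul, coeff_monomial, if_neg this, smul_zero]
    · intro hne
      exact (hne (Finset.mem_filter.mpr ⟨Finset.mem_univ dh, rfl⟩)).elim
  · -- evaluation identity
    intro x
    set y : Fin n → ℝ := fun j => eval x (P j) with hy
    have key : ∀ d : Fin (n + 1) → Fin (t + 1),
        eval x (c d • ∏ j, g j ^ (d j : ℕ))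
          = c d * (∏ j : Fin n, y j ^ (md d j)) * (x i) ^ (d 0 : ℕ) := by
      intro d
      rw [smul_eq_C_mul, eval_mul, eval_C]
      rw [show (∏ j, g j ^ (d j : ℕ)) = g 0 ^ (d 0 : ℕ) * ∏ j : Fin n, g j.succ ^ (d j.succ : ℕ)
        from Fin.prod_univ_succ _]
      rw [eval_mul, map_prod]
      simp only [map_pow, hg, Fin.cons_zero, Fin.cons_succ, eval_X, hmdapp]
      ring
    have hrel2 : ∑ d : Fin (n + 1) → Fin (t + 1),
        c d * (∏ j : Fin n, y j ^ (md d j)) * (x i) ^ (d 0 : ℕ) = 0 := by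
      rw [← Finset.sum_congr rfl (fun d _ => key d)]
      rw [← map_sum (eval x)]
      rw [hrel, map_zero]
    have heval : ∀ k, eval y (α k)
        = ∑ d ∈ Finset.univ.filter (fun d : Fin (n + 1) → Fin (t + 1) => (d 0 : ℕ) = k),
            c d * ∏ j : Fin n, y j ^ (md d j) := by
      intro k
      rw [hα, map_sum]
      refine Finset.sum_congr rfl fun d _ => ?_
      rw [smul_eq_C_mul, eval_mul, eval_C, eval_monomial]
      rw [Finsupp.prod_fintype _ _ (fun j => pow_zero (y j))]
      simp
    calc ∑ k' ∈ Finset.range (t + 1), eval y (α k') * (x i) ^ k'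
        = ∑ k' ∈ Finset.range (t + 1),
            ∑ d ∈ Finset.univ.filter (fun d : Fin (n + 1) → Fin (t + 1) => (d 0 : ℕ) = k'),
              c d * (∏ j : Fin n, y j ^ (md d j)) * (x i) ^ (d 0 : ℕ) := by
          refine Finset.sum_congr rfl fun k' _ => ?_
          rw [heval, Finset.sum_mul]
          refine Finset.sum_congr rfl fun d hd => ?_
          rw [(Finset.mem_filter.mp hd).2]
      _ = ∑ d : Fin (n + 1) → Fin (t + 1),
            c d * (∏ j : Fin n, y j ^ (md d j)) * (x i) ^ (d 0 : ℕ) := by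
          exact Finset.sum_fiberwise_of_maps_to
            (fun d _ => Finset.mem_range.mpr (d 0).isLt) _
      _ = 0 := hrel2

private lemma ncard_pi_le {n : ℕ} (t : ℕ) (RS : Fin n → Set ℝ) (hfin : ∀ i, (RS i).Finite)
    (hcard : ∀ i, (RS i).ncard ≤ t) : (Set.pi Set.univ RS).ncard ≤ t ^ n := by
  classical
  have hsub : ∀ i, Finite (RS i) := fun i => (hfin i).to_subtype
  let φ : (Set.pi Set.univ RS) → (∀ i, RS i) := fun x i => ⟨x.1 i, x.2 i (Set.mem_univ i)⟩
  have hφ : Function.Injective φ := by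
    intro a b h
    apply Subtype.ext
    funext i
    exact congrArg Subtype.val (congrFun h i)
  have h2 : Nat.card (Set.pi Set.univ RS) ≤ Nat.card (∀ i, RS i) :=
    Nat.card_le_card_of_injective φ hφ
  rw [← Nat.card_coe_set_eq]
  refine h2.trans ?_
  rw [Nat.card_pi]
  calc ∏ i, Nat.card (RS i) ≤ ∏ _i : Fin n, t := by
        refine Finset.prod_le_prod' fun i _ => ?_
        rw [Nat.card_coe_set_eq]
        exact hcard i
    _ = t ^ n := by simp

open MvPolynomial in
/-- A polynomial map `P : ℝ^n → ℝ^n` of degree at most `N` has fibers of boundedly many points over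
almost every point of its image. -/
theorem stmt9 (n N : ℕ) :
    ∃ C : ℕ, ∀ P : Fin n → MvPolynomial (Fin n) ℝ,
      (∀ i, (P i).totalDegree ≤ N) →
      ∀ᵐ y : (Fin n → ℝ) ∂volume,
        y ∈ Set.range (fun x i => MvPolynomial.eval x (P i)) →
        ((fun x i => MvPolynomial.eval x (P i)) ⁻¹' {y}).Finite ∧
        ((fun x i => MvPolynomial.eval x (P i)) ⁻¹' {y}).ncard ≤ C := by
  classical
  set t := (2 * (n + 1) * max N 1) ^ n + 1 with htdef
  refine ⟨t ^ n, ?_⟩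
  intro P hP
  choose α k hk hα hrel using fun i => exists_alpha n N P hP i
  have hZ : volume (⋃ i, {y : Fin n → ℝ | eval y (α i (k i)) = 0}) = 0 :=
    measure_iUnion_null fun i => mv_zero_set_null n _ (hα i)
  filter_upwards [measure_eq_zero_iff_ae_notMem.mp hZ] with y hy hyr
  set r : Fin n → Polynomial ℝ := fun i =>
    ∑ k' ∈ Finset.range (t + 1), Polynomial.C (eval y (α i k')) * Polynomial.X ^ k' with hr
  have hcoeffr : ∀ i, ∀ k0 ≤ t, (r i).coeff k0 = eval y (α i k0) := by
    intro i k0 hk0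
    rw [hr]
    rw [Polynomial.finset_sum_coeff]
    rw [Finset.sum_eq_single k0]
    · rw [Polynomial.coeff_C_mul, Polynomial.coeff_X_pow, if_pos rfl, mul_one]
    · intro b _ hbne
      rw [Polynomial.coeff_C_mul, Polynomial.coeff_X_pow, if_neg (fun h => hbne h.symm),
        mul_zero]
    · intro hmem
      exact absurd (Finset.mem_range.mpr (Nat.lt_succ_of_le hk0)) hmem
  have hr0 : ∀ i, r i ≠ 0 := by
    intro i h0
    apply hy
    refine Set.mem_iUnion.mpr ⟨i, ?_⟩
    show eval y (α i (k i)) = 0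
    rw [← hcoeffr i (k i) (hk i), h0, Polynomial.coeff_zero]
  have hdeg : ∀ i, (r i).natDegree ≤ t := by
    intro i
    rw [hr]
    refine Polynomial.natDegree_sum_le_of_forall_le _ _ fun k' hk' => ?_
    refine (Polynomial.natDegree_C_mul_le _ _).trans ?_
    rw [Polynomial.natDegree_X_pow]
    exact Nat.lt_succ_iff.mp (Finset.mem_range.mp hk')
  set F := (fun x (i : Fin n) => eval x (P i)) ⁻¹' {y} with hF
  have hroot : ∀ x ∈ F, ∀ i, (r i).IsRoot (x i) := by
    intro x hx i
    have hyx : (fun j => eval x (P j)) = y := Set.mem_singleton_iff.mp hx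
    have h1 := hrel i x
    rw [hyx] at h1
    show Polynomial.eval (x i) (r i) = 0
    rw [hr, Polynomial.eval_finset_sum]
    simpa [Polynomial.eval_mul, Polynomial.eval_pow] using h1
  set RS : Fin n → Set ℝ := fun i => {z : ℝ | (r i).IsRoot z} with hRS
  have hRSfin : ∀ i, (RS i).Finite := fun i => Polynomial.finite_setOf_isRoot (hr0 i)
  have hsub : F ⊆ Set.pi Set.univ RS := fun x hx i _ => hroot x hx i
  have hFfin : F.Finite := (Set.Finite.pi hRSfin).subset hsub
  refine ⟨hFfin, ?_⟩
  have hRScard : ∀ i, (RS i).ncard ≤ t := by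
    intro i
    have h1 : RS i ⊆ ((r i).roots.toFinset : Set ℝ) := by
      intro z hz
      rw [Finset.mem_coe, Multiset.mem_toFinset, Polynomial.mem_roots (hr0 i)]
      exact hz
    calc (RS i).ncard ≤ (((r i).roots.toFinset : Finset ℝ) : Set ℝ).ncard :=
          Set.ncard_le_ncard h1 ((r i).roots.toFinset.finite_toSet)
      _ = (r i).roots.toFinset.card := by rw [Set.ncard_coe_finset]
      _ ≤ Multiset.card (r i).roots := Multiset.toFinset_card_le _
      _ ≤ (r i).natDegree := Polynomial.card_roots' _
      _ ≤ t := hdeg i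
  calc F.ncard ≤ (Set.pi Set.univ RS).ncard :=
        Set.ncard_le_ncard hsub (Set.Finite.pi hRSfin)
    _ ≤ t ^ n := ncard_pi_le t RS hRSfin hRScard
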